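/- Let S = (V, B) be a Steiner triple system of order v, let a, b be distinct points, and let x_1, x_2, …, x_{2k} be the consecutive vertices of a cycle of length 2k in the cycle graph C_ab. Then the collection of blocks obtained from B by removing the 2k blocks {a,x_1,x_2}, {a,x_3,x_4}, …, {a,x_{2k-1},x_{2k}}, {b,x_2,x_3}, …, {b,x_{2k-2},x_{2k-1}}, {b,x_{2k},x_1} and replacing them by the 2k blocks obtained from these by exchanging the roles of a and b is again a Steiner triple system of order v. -/
import Mathlib


/-- A Steiner triple system of order `v` on the point set `Fin v`:
a collection of 3-element blocks such that every pair of distinct points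
lies in exactly one block. -/
structure STS (v : ℕ) where
  blocks : Finset (Finset (Fin v))
  card_blocks : ∀ B ∈ blocks, B.card = 3
  covers : ∀ x y : Fin v, x ≠ y → ∃! B, B ∈ blocks ∧ x ∈ B ∧ y ∈ B

/-- Isomorphism of Steiner triple systems on the same point set: a bijection of the
points mapping the block set of one onto the block set of the other. -/
def STS.Iso {v : ℕ} (S S' : STS v) : Prop :=
  ∃ φ : Equiv.Perm (Fin v), ∀ B : Finset (Fin v), B ∈ S.blocks ↔ B.image φ ∈ S'.blocks

/-- The cycle graph `C_ab` of an STS: vertices are the points outside the block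
through `a` and `b` (the remaining points are isolated vertices of this graph),
and `x`, `y` are adjacent whenever `{a,x,y}` or `{b,x,y}` is a block. -/
def STS.cycleGraph {v : ℕ} (S : STS v) (a b : Fin v) : SimpleGraph (Fin v) :=
  SimpleGraph.fromRel fun x y =>
    (∀ B ∈ S.blocks, a ∈ B → b ∈ B → x ∉ B ∧ y ∉ B) ∧
    ((({a, x, y} : Finset (Fin v)) ∈ S.blocks) ∨ (({b, x, y} : Finset (Fin v)) ∈ S.blocks))

/-- `x 0, x 1, …, x (2k-1)` are the consecutive vertices of a cycle of length `2k`
in the cycle graph `C_ab`, listed so that the blocks through `a` occupy the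
even positions and the blocks through `b` the odd positions. -/
def IsSwitchCycle {v : ℕ} (S : STS v) (a b : Fin v) (k : ℕ)
    (x : ZMod (2 * k) → Fin v) : Prop :=
  2 ≤ k ∧ a ≠ b ∧ Function.Injective x ∧
  (∀ i : ZMod (2 * k), (S.cycleGraph a b).Adj (x i) (x (i + 1))) ∧
  (∀ j : Fin k,
    (({a, x ((2 * (j : ℕ) : ℕ)), x ((2 * (j : ℕ) + 1 : ℕ))} : Finset (Fin v)) ∈ S.blocks) ∧
    (({b, x ((2 * (j : ℕ) + 1 : ℕ)), x ((2 * (j : ℕ) + 2 : ℕ))} : Finset (Fin v)) ∈ S.blocks))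

/-- The `2k` blocks of the STS corresponding to the cycle with consecutive
vertices `x 0, …, x (2k-1)` in the cycle graph `C_ab`. -/
def removedBlocks {v : ℕ} (a b : Fin v) (k : ℕ)
    (x : ZMod (2 * k) → Fin v) : Finset (Finset (Fin v)) :=
  (Finset.univ.image fun j : Fin k =>
    ({a, x ((2 * (j : ℕ) : ℕ)), x ((2 * (j : ℕ) + 1 : ℕ))} : Finset (Fin v))) ∪
  (Finset.univ.image fun j : Fin k =>
    ({b, x ((2 * (j : ℕ) + 1 : ℕ)), x ((2 * (j : ℕ) + 2 : ℕ))} : Finset (Fin v)))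

/-- The block set obtained from `S` by the cycle switch on the cycle
`x 0, …, x (2k-1)` of `C_ab`: the `2k` cycle blocks are removed and replaced
by the blocks obtained from them by exchanging the roles of `a` and `b`. -/
def switchedBlocks {v : ℕ} (S : STS v) (a b : Fin v) (k : ℕ)
    (x : ZMod (2 * k) → Fin v) : Finset (Finset (Fin v)) :=
  (S.blocks \ removedBlocks a b k x) ∪
    (removedBlocks a b k x).image (Finset.image (Equiv.swap a b))

/-- `S'` is obtained from `S` by a single cycle switch of a cycle whose length lies
in the set `C`. -/
def SwitchStep {v : ℕ} (C : Set ℕ) (S S' : STS v) : Prop :=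
  ∃ (a b : Fin v) (k : ℕ) (x : ZMod (2 * k) → Fin v),
    2 * k ∈ C ∧ IsSwitchCycle S a b k x ∧ S'.blocks = switchedBlocks S a b k x

/-- The switching graph `Sw_C(v)`: vertices are the isomorphism classes of `STS(v)`s,
with an edge between two (distinct) classes whenever some system in one class is
transformed by a single cycle switch, of a cycle whose length lies in `C`, into a
system in the other class. -/
def SwGraph (v : ℕ) (C : Set ℕ) : SimpleGraph (Quot (@STS.Iso v)) :=
  SimpleGraph.fromRel fun q q' =>
    ∃ S S' : STS v, Quot.mk _ S = q ∧ Quot.mk _ S' = q' ∧ SwitchStep C S S'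

/-- The STS `S` contains a cycle of length `n`, i.e. some cycle graph of `S`
has a cycle of length `n`. -/
def STS.HasCycle {v : ℕ} (S : STS v) (n : ℕ) : Prop :=
  ∃ a b : Fin v, a ≠ b ∧ ∃ (z : Fin v) (w : (S.cycleGraph a b).Walk z z),
    w.IsCycle ∧ w.length = n

/-- `W` is the vertex set of a cycle of length `n` in the cycle graph `C_ab`. -/
def CycleOn {v : ℕ} (S : STS v) (a b : Fin v) (n : ℕ) (W : Finset (Fin v)) : Prop :=
  W.card = n ∧ ∃ z ∈ W, ∃ w : (S.cycleGraph a b).Walk z z,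
    w.IsCycle ∧ w.length = n ∧ ∀ u : Fin v, u ∈ w.support ↔ u ∈ W

/-- The number of cycles of length `n` in the STS `S`: a cycle is recorded as a pair
consisting of the (unordered) pair `{a,b}` of points and the vertex set of the cycle
in `C_ab`. -/
noncomputable def STS.numCycles {v : ℕ} (S : STS v) (n : ℕ) : ℕ :=
  Nat.card {p : Finset (Fin v) × Finset (Fin v) //
    ∃ a b : Fin v, a ≠ b ∧ p.1 = {a, b} ∧ CycleOn S a b n p.2}

/-- The cycle graph `C_ab` decomposes as the disjoint union of cycles whose vertex
sets are listed in `Ws` and whose lengths are given by the list `L`. -/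
def CycleStructure {v : ℕ} (S : STS v) (a b : Fin v) (L : List ℕ) : Prop :=
  ∃ Ws : List (Finset (Fin v)),
    Ws.map Finset.card = L ∧ List.Pairwise Disjoint Ws ∧
    (∀ W ∈ Ws, CycleOn S a b W.card W) ∧
    (∀ z : Fin v, (∀ B ∈ S.blocks, a ∈ B → b ∈ B → z ∉ B) ↔ ∃ W ∈ Ws, z ∈ W)

/-- The six points `a,…,f` carry a Pasch configuration of `S`, with blocks
`{a,b,c}, {a,d,e}, {b,e,f}, {c,d,f}`. -/
def PaschQuad {v : ℕ} (S : STS v) (a b c d e f : Fin v) : Prop :=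
  ({a, b, c, d, e, f} : Finset (Fin v)).card = 6 ∧
  ({a, b, c} : Finset (Fin v)) ∈ S.blocks ∧ ({a, d, e} : Finset (Fin v)) ∈ S.blocks ∧
  ({b, e, f} : Finset (Fin v)) ∈ S.blocks ∧ ({c, d, f} : Finset (Fin v)) ∈ S.blocks

/-- `S` contains a Pasch configuration. -/
def STS.HasPasch {v : ℕ} (S : STS v) : Prop :=
  ∃ a b c d e f : Fin v, PaschQuad S a b c d e f

/-- `P` is (the block set of) a Pasch configuration of `S`. -/
def IsPaschConfig {v : ℕ} (S : STS v) (P : Finset (Finset (Fin v))) : Prop :=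
  ∃ a b c d e f : Fin v, PaschQuad S a b c d e f ∧
    P = {({a, b, c} : Finset (Fin v)), {a, d, e}, {b, e, f}, {c, d, f}}

/-- The block set obtained from `S` by switching the Pasch configuration
`{a,b,c}, {a,d,e}, {b,e,f}, {c,d,f}`: its four blocks are replaced by the unique
other set of four blocks on the same six points covering the same pairs. -/
def paschSwitched {v : ℕ} (S : STS v) (a b c d e f : Fin v) : Finset (Finset (Fin v)) :=
  (S.blocks \ {({a, b, c} : Finset (Fin v)), {a, d, e}, {b, e, f}, {c, d, f}}) ∪
    {({a, b, e} : Finset (Fin v)), {a, c, d}, {b, c, f}, {d, e, f}}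

/-- `S` and `S'` are twin systems: they are non-isomorphic, each contains exactly one
Pasch configuration, and switching this unique Pasch configuration in each system
yields a system isomorphic to the other. -/
def IsTwinPair {v : ℕ} (S S' : STS v) : Prop :=
  ¬ S.Iso S' ∧
  (∃! P, IsPaschConfig S P) ∧ (∃! P, IsPaschConfig S' P) ∧
  (∀ a b c d e f : Fin v, PaschQuad S a b c d e f →
    ∃ T : STS v, T.blocks = paschSwitched S a b c d e f ∧ T.Iso S') ∧
  (∀ a b c d e f : Fin v, PaschQuad S' a b c d e f →
    ∃ T : STS v, T.blocks = paschSwitched S' a b c d e f ∧ T.Iso S)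

/-- The isomorphism classes `q` and `q'` are the classes of a pair of twin systems. -/
def QTwin {v : ℕ} (q q' : Quot (@STS.Iso v)) : Prop :=
  ∃ S S' : STS v, Quot.mk _ S = q ∧ Quot.mk _ S' = q' ∧ IsTwinPair S S'

/-- Switching a cycle of length `2k` in the cycle graph `C_ab` of a
Steiner triple system of order `v` again yields a Steiner triple system of order `v`. -/
theorem switchedBlocks_isSTS {v : ℕ} (S : STS v) (a b : Fin v) (k : ℕ)
    (x : ZMod (2 * k) → Fin v) (hx : IsSwitchCycle S a b k x) :
    ∃ T : STS v, T.blocks = switchedBlocks S a b k x := by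
  obtain ⟨hk, hab, hinj, hadj, hblk⟩ := hx
  haveI : NeZero (2 * k) := ⟨by omega⟩
  set σ := Equiv.swap a b with hσ
  set R := removedBlocks a b k x with hRdef
  have hmemR : ∀ B, B ∈ R ↔
      (∃ j : Fin k, B = {a, x ((2 * (j : ℕ) : ℕ)), x ((2 * (j : ℕ) + 1 : ℕ))}) ∨
      (∃ j : Fin k, B = {b, x ((2 * (j : ℕ) + 1 : ℕ)), x ((2 * (j : ℕ) + 2 : ℕ))}) := by
    intro B
    simp [hRdef, removedBlocks, eq_comm]
  have hRsub : R ⊆ S.blocks := by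
    intro B hB
    rcases (hmemR B).1 hB with ⟨j, rfl⟩ | ⟨j, rfl⟩
    · exact (hblk j).1
    · exact (hblk j).2
  obtain ⟨B0, ⟨hB0, haB0, hbB0⟩, -⟩ := S.covers a b hab
  have hxB0 : ∀ i, x i ∉ B0 := by
    intro i
    have h := hadj i
    rw [STS.cycleGraph, SimpleGraph.fromRel_adj] at h
    rcases h.2 with h' | h'
    · exact (h'.1 B0 hB0 haB0 hbB0).1
    · exact (h'.1 B0 hB0 haB0 hbB0).2
  have hax : ∀ i, x i ≠ a := fun i h => hxB0 i (h ▸ haB0)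
  have hbx : ∀ i, x i ≠ b := fun i h => hxB0 i (h ▸ hbB0)
  have swapx : ∀ i, σ (x i) = x i := fun i => Equiv.swap_apply_of_ne_of_ne (hax i) (hbx i)
  have swapa : σ a = b := Equiv.swap_apply_left a b
  have swapb : σ b = a := Equiv.swap_apply_right a b
  have castval : ∀ (n : ℕ) (i : ZMod (2 * k)), n = i.val → ((n : ℕ) : ZMod (2 * k)) = i := by
    intro n i h
    rw [h, ZMod.natCast_val, ZMod.cast_id]
  have L1 : ∀ i : ZMod (2 * k), ∃ C ∈ R, a ∈ C ∧ x i ∈ C := by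
    intro i
    have hlt : i.val < 2 * k := ZMod.val_lt i
    by_cases he : i.val % 2 = 0
    · refine ⟨_, (hmemR _).2 (Or.inl ⟨⟨i.val / 2, by omega⟩, rfl⟩), by simp, ?_⟩
      rw [castval (2 * ((⟨i.val / 2, by omega⟩ : Fin k) : ℕ)) i (by simp; omega)]
      simp
    · refine ⟨_, (hmemR _).2 (Or.inl ⟨⟨i.val / 2, by omega⟩, rfl⟩), by simp, ?_⟩
      rw [castval (2 * ((⟨i.val / 2, by omega⟩ : Fin k) : ℕ) + 1) i (by simp; omega)]
      simp
  have L2 : ∀ i : ZMod (2 * k), ∃ C ∈ R, b ∈ C ∧ x i ∈ C := by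
    intro i
    have hlt : i.val < 2 * k := ZMod.val_lt i
    by_cases he : i.val % 2 = 1
    · refine ⟨_, (hmemR _).2 (Or.inr ⟨⟨i.val / 2, by omega⟩, rfl⟩), by simp, ?_⟩
      rw [castval (2 * ((⟨i.val / 2, by omega⟩ : Fin k) : ℕ) + 1) i (by simp; omega)]
      simp
    · by_cases h0 : i.val = 0
      · refine ⟨_, (hmemR _).2 (Or.inr ⟨⟨k - 1, by omega⟩, rfl⟩), by simp, ?_⟩
        have hi0 : i = 0 := by
          have := (ZMod.val_eq_zero i).mp h0
          exact this
        have : ((2 * ((⟨k - 1, by omega⟩ : Fin k) : ℕ) + 2 : ℕ) : ZMod (2 * k)) = i := by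
          have h2 : (2 * (k - 1) + 2 : ℕ) = 2 * k := by omega
          simp only [h2]
          rw [hi0, ZMod.natCast_self]
        rw [this]
        simp
      · refine ⟨_, (hmemR _).2 (Or.inr ⟨⟨i.val / 2 - 1, by omega⟩, rfl⟩), by simp, ?_⟩
        rw [castval (2 * ((⟨i.val / 2 - 1, by omega⟩ : Fin k) : ℕ) + 2) i (by simp; omega)]
        simp
  have Linv : ∀ y z : Fin v, (∃ B ∈ R, y ∈ B ∧ z ∈ B) → ∃ C ∈ R, σ y ∈ C ∧ σ z ∈ C := by
    rintro y z ⟨B, hBR, hy, hz⟩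
    rcases (hmemR B).1 hBR with ⟨j, rfl⟩ | ⟨j, rfl⟩
    · simp only [Finset.mem_insert, Finset.mem_singleton] at hy hz
      have hy' : y = a ∨ ∃ i, y = x i := by
        rcases hy with h | h | h
        exacts [Or.inl h, Or.inr ⟨_, h⟩, Or.inr ⟨_, h⟩]
      have hz' : z = a ∨ ∃ i, z = x i := by
        rcases hz with h | h | h
        exacts [Or.inl h, Or.inr ⟨_, h⟩, Or.inr ⟨_, h⟩]
      rcases hy' with rfl | ⟨i, rfl⟩ <;> rcases hz' with h | ⟨i', rfl⟩
      · obtain ⟨C, hC, hbC, -⟩ := L2 0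
        subst h
        exact ⟨C, hC, by rw [swapa]; exact hbC, by rw [swapa]; exact hbC⟩
      · obtain ⟨C, hC, hbC, hxC⟩ := L2 i'
        exact ⟨C, hC, by rw [swapa]; exact hbC, by rw [swapx]; exact hxC⟩
      · obtain ⟨C, hC, hbC, hxC⟩ := L2 i
        subst h
        exact ⟨C, hC, by rw [swapx]; exact hxC, by rw [swapa]; exact hbC⟩
      · exact ⟨_, hBR, by rw [swapx]; simp only [Finset.mem_insert, Finset.mem_singleton]; exact hy, by rw [swapx]; simp only [Finset.mem_insert, Finset.mem_singleton]; exact hz⟩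
    · simp only [Finset.mem_insert, Finset.mem_singleton] at hy hz
      have hy' : y = b ∨ ∃ i, y = x i := by
        rcases hy with h | h | h
        exacts [Or.inl h, Or.inr ⟨_, h⟩, Or.inr ⟨_, h⟩]
      have hz' : z = b ∨ ∃ i, z = x i := by
        rcases hz with h | h | h
        exacts [Or.inl h, Or.inr ⟨_, h⟩, Or.inr ⟨_, h⟩]
      rcases hy' with rfl | ⟨i, rfl⟩ <;> rcases hz' with h | ⟨i', rfl⟩
      · obtain ⟨C, hC, haC, -⟩ := L1 0
        subst h
        exact ⟨C, hC, by rw [swapb]; exact haC, by rw [swapb]; exact haC⟩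
      · obtain ⟨C, hC, haC, hxC⟩ := L1 i'
        exact ⟨C, hC, by rw [swapb]; exact haC, by rw [swapx]; exact hxC⟩
      · obtain ⟨C, hC, haC, hxC⟩ := L1 i
        subst h
        exact ⟨C, hC, by rw [swapx]; exact hxC, by rw [swapb]; exact haC⟩
      · exact ⟨_, hBR, by rw [swapx]; simp only [Finset.mem_insert, Finset.mem_singleton]; exact hy, by rw [swapx]; simp only [Finset.mem_insert, Finset.mem_singleton]; exact hz⟩
  have hmemT : ∀ D, D ∈ switchedBlocks S a b k x ↔
      (D ∈ S.blocks ∧ D ∉ R) ∨ ∃ E ∈ R, D = E.image σ := by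
    intro D
    simp [switchedBlocks, ← hRdef, Finset.mem_union, Finset.mem_sdiff, Finset.mem_image,
      ← hσ, eq_comm, and_comm]
  have himg : ∀ (E : Finset (Fin v)) (y : Fin v), y ∈ E.image σ → σ y ∈ E := by
    intro E y hy
    obtain ⟨u, hu, h⟩ := Finset.mem_image.mp hy
    have : u = σ y := by rw [← h, Equiv.swap_apply_self]
    rwa [← this]
  refine ⟨⟨switchedBlocks S a b k x, ?_, ?_⟩, rfl⟩
  · intro D hD
    rcases (hmemT D).1 hD with ⟨hD1, -⟩ | ⟨E, hE, rfl⟩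
    · exact S.card_blocks D hD1
    · rw [Finset.card_image_of_injective E σ.injective]
      exact S.card_blocks E (hRsub hE)
  · intro y z hyz
    obtain ⟨B, ⟨hBmem, hyB, hzB⟩, huniq⟩ := S.covers y z hyz
    by_cases hBR : B ∈ R
    · obtain ⟨C, hC, hyC, hzC⟩ := Linv y z ⟨B, hBR, hyB, hzB⟩
      refine ⟨C.image σ, ⟨(hmemT _).2 (Or.inr ⟨C, hC, rfl⟩),
        Finset.mem_image.mpr ⟨σ y, hyC, Equiv.swap_apply_self _ _ _⟩,
        Finset.mem_image.mpr ⟨σ z, hzC, Equiv.swap_apply_self _ _ _⟩⟩, ?_⟩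
      rintro D ⟨hD, hyD, hzD⟩
      rcases (hmemT D).1 hD with ⟨hD1, hD2⟩ | ⟨E, hE, rfl⟩
      · exact absurd (huniq D ⟨hD1, hyD, hzD⟩ ▸ hBR) hD2
      · have h1 : σ y ∈ E := himg E y hyD
        have h2 : σ z ∈ E := himg E z hzD
        have hne : σ y ≠ σ z := fun h => hyz (σ.injective h)
        obtain ⟨B', -, huniq'⟩ := S.covers (σ y) (σ z) hne
        have := (huniq' E ⟨hRsub hE, h1, h2⟩).trans (huniq' C ⟨hRsub hC, hyC, hzC⟩).symm
        rw [this]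
    · refine ⟨B, ⟨(hmemT B).2 (Or.inl ⟨hBmem, hBR⟩), hyB, hzB⟩, ?_⟩
      rintro D ⟨hD, hyD, hzD⟩
      rcases (hmemT D).1 hD with ⟨hD1, -⟩ | ⟨E, hE, rfl⟩
      · exact huniq D ⟨hD1, hyD, hzD⟩
      · obtain ⟨C, hC, hyC, hzC⟩ := Linv (σ y) (σ z) ⟨E, hE, himg E y hyD, himg E z hzD⟩
        rw [Equiv.swap_apply_self] at hyC hzC
        exact absurd (huniq C ⟨hRsub hC, hyC, hzC⟩ ▸ hBR) (by simp [hC])
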